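/- Let n ≥ 2 and let a₂,…,aₙ : ℝ → ℝ be functions with a₂ differentiable at 0, such that for every t ∈ ℝ the monic polynomial P(t)(x) = xⁿ + a₂(t)xⁿ⁻² - a₃(t)xⁿ⁻³ + ⋯ + (-1)ⁿaₙ(t) (i.e. with a₁ ≡ 0) has all roots real. If a₂(0) = 0 then a₂'(0) = 0; that is, a₂ vanishes at least to second order at 0. -/

import Mathlib

open Polynomial

/-- The monic polynomial curve `P(t)(x) = xⁿ - a₁(t)xⁿ⁻¹ + a₂(t)xⁿ⁻² - ⋯ + (-1)ⁿ aₙ(t)`. -/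
noncomputable def curvePoly (n : ℕ) (a : ℕ → ℝ → ℝ) (t : ℝ) : Polynomial ℝ :=
  X ^ n + ∑ k ∈ Finset.Icc 1 n, C ((-1 : ℝ) ^ k * a k t) * X ^ (n - k)

/-- `x : T → ℝⁿ` parametrizes the roots of `P` on `T`: for each `t ∈ T` the multiset
`{x₁(t),…,xₙ(t)}` equals the multiset of roots of `P(t)` with multiplicity. -/
def IsRootParamOn (n : ℕ) (a : ℕ → ℝ → ℝ) (T : Set ℝ) (x : Fin n → ℝ → ℝ) : Prop :=
  ∀ t ∈ T, (curvePoly n a t).roots = Multiset.map (fun i => x i t) (Finset.univ : Finset (Fin n)).val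

lemma esymm_two_cons (x : ℝ) (s : Multiset ℝ) :
    (x ::ₘ s).esymm 2 = s.esymm 2 + x * s.sum := by
  unfold Multiset.esymm
  rw [show (2 : ℕ) = 1 + 1 from rfl, Multiset.powersetCard_cons, Multiset.map_add,
    Multiset.sum_add, Multiset.map_map, Multiset.powersetCard_one, Multiset.map_map]
  congr 1
  rw [show x * s.sum = ((s.map (fun y => x * y)).sum) by rw [Multiset.sum_map_mul_left]; simp]
  congr 1
  apply Multiset.map_congr rfl
  intro y _
  simp

lemma sq_sum_multiset (s : Multiset ℝ) :
    s.sum ^ 2 = (s.map (fun x => x ^ 2)).sum + 2 * s.esymm 2 := by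
  induction s using Multiset.induction with
  | empty => simp [Multiset.esymm, Multiset.powersetCard_zero_right]
  | cons x s ih =>
    rw [Multiset.sum_cons, Multiset.map_cons, Multiset.sum_cons, esymm_two_cons]
    ring_nf
    ring_nf at ih
    linarith

lemma curve_natDegree (n : ℕ) (hn : 1 ≤ n) (a : ℕ → ℝ → ℝ) (t : ℝ) :
    (curvePoly n a t).natDegree = n ∧ (curvePoly n a t).leadingCoeff = 1 := by
  have hdeg : (∑ k ∈ Finset.Icc 1 n, C ((-1 : ℝ) ^ k * a k t) * X ^ (n - k)).degree
      < (X ^ n : Polynomial ℝ).degree := by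
    rw [degree_X_pow]
    refine lt_of_le_of_lt (Polynomial.degree_sum_le _ _) ?_
    rw [Finset.sup_lt_iff (by exact_mod_cast WithBot.bot_lt_coe n)]
    intro k hk
    simp only [Finset.mem_Icc] at hk
    refine lt_of_le_of_lt (degree_C_mul_X_pow_le _ _) ?_
    exact_mod_cast Nat.sub_lt_of_pos_le (by omega) hk.2
  have hd : (curvePoly n a t).degree = n := by
    rw [curvePoly, degree_add_eq_left_of_degree_lt hdeg, degree_X_pow]
  constructor
  · exact natDegree_eq_of_degree_eq_some hd
  · rw [Polynomial.leadingCoeff, natDegree_eq_of_degree_eq_some hd, curvePoly, coeff_add,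
      coeff_X_pow, if_pos rfl]
    have : (∑ k ∈ Finset.Icc 1 n, C ((-1 : ℝ) ^ k * a k t) * X ^ (n - k)).coeff n = 0 := by
      apply coeff_eq_zero_of_degree_lt
      calc _ < (X ^ n : Polynomial ℝ).degree := hdeg
        _ = n := degree_X_pow n
    rw [this, add_zero]

lemma curve_coeff (n k : ℕ) (hk : 1 ≤ k) (hkn : k ≤ n) (a : ℕ → ℝ → ℝ) (t : ℝ) :
    (curvePoly n a t).coeff (n - k) = (-1 : ℝ) ^ k * a k t := by
  rw [curvePoly, coeff_add, coeff_X_pow, if_neg (by omega), zero_add, finset_sum_coeff]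
  rw [Finset.sum_eq_single k]
  · rw [coeff_C_mul, coeff_X_pow, if_pos rfl, mul_one]
  · intro j hj hjk
    simp only [Finset.mem_Icc] at hj
    rw [coeff_C_mul, coeff_X_pow, if_neg (by omega), mul_zero]
  · intro h
    exact absurd (Finset.mem_Icc.2 ⟨hk, hkn⟩) h

lemma a2_nonpos (n : ℕ) (hn : 2 ≤ n) (a : ℕ → ℝ → ℝ)
    (ha1 : ∀ t : ℝ, a 1 t = 0)
    (hreal : ∀ t : ℝ, ((curvePoly n a t).roots).card = n) (t : ℝ) : a 2 t ≤ 0 := by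
  obtain ⟨hdeg, hlc⟩ := curve_natDegree n (by omega) a t
  have hcard : Multiset.card (curvePoly n a t).roots = (curvePoly n a t).natDegree := by
    rw [hdeg]; exact hreal t
  set s := (curvePoly n a t).roots with hs
  -- sum of roots is zero
  have h1 : s.sum = 0 := by
    have := Polynomial.coeff_eq_esymm_roots_of_card hcard (k := n - 1) (by omega)
    rw [hdeg, hlc, curve_coeff n 1 le_rfl (by omega), ha1, show n - (n - 1) = 1 by omega] at this
    have hesymm : s.esymm 1 = s.sum := by
      rw [Multiset.esymm, Multiset.powersetCard_one, Multiset.map_map]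
      simp
    rw [hesymm] at this
    have : (0 : ℝ) = -s.sum := by
      rw [mul_zero] at this; simpa using this.symm
    linarith
  -- a 2 t = esymm 2
  have h2 : a 2 t = s.esymm 2 := by
    have := Polynomial.coeff_eq_esymm_roots_of_card hcard (k := n - 2) (by omega)
    rw [hdeg, hlc, curve_coeff n 2 (by omega) hn, show n - (n - 2) = 2 by omega] at this
    simpa using this
  have hsq := sq_sum_multiset s
  rw [h1] at hsq
  have hnn : 0 ≤ (s.map (fun x => x ^ 2)).sum := by
    apply Multiset.sum_nonneg
    intro x hx
    obtain ⟨y, _, rfl⟩ := Multiset.mem_map.1 hx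
    positivity
  rw [h2]
  nlinarith

theorem a2_vanishes_to_second_order
    (n : ℕ) (hn : 2 ≤ n) (a : ℕ → ℝ → ℝ)
    (ha1 : ∀ t : ℝ, a 1 t = 0)
    (hdiff : DifferentiableAt ℝ (a 2) 0)
    (hreal : ∀ t : ℝ, ((curvePoly n a t).roots).card = n)
    (h0 : a 2 0 = 0) :
    deriv (a 2) 0 = 0 := by
  have hmax : IsLocalMax (a 2) 0 := by
    apply Filter.Eventually.of_forall
    intro t
    rw [h0]
    exact a2_nonpos n hn a ha1 hreal t
  exact hmax.deriv_eq_zero
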